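/- arXiv:cs/0002008 — 5 statements merged into one kernel-verified Lean document; each statement's English description precedes it below -/
import Mathlib

section
/- Let S : X → Y and T : Y → Z be automata with boundary and let (v₀,w₀) be a state of the binding S·T. Then behaviours of S·T from (v₀,w₀) correspond bijectively to pairs consisting of a behaviour γ of S from v₀ and a behaviour δ of T from w₀ of the same length and with the same appearance on the common boundary Y; under this correspondence the k-th motion of the behaviour of S·T is the pair of the k-th motions of γ and δ. -/
/-- An automaton with boundary `S : X → Y`, where the action sets `X`, `Y`
have trivial (reflexive) actions `eX`, `eY`. -/
structure Aut (X Y : Type) (eX : X) (eY : Y) where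
  State : Type
  Motion : Type
  src : Motion → State
  tgt : Motion → State
  refl : State → Motion
  refl_src : ∀ v, src (refl v) = v
  refl_tgt : ∀ v, tgt (refl v) = v
  labL : Motion → X
  labR : Motion → Y
  labL_refl : ∀ v, labL (refl v) = eX
  labR_refl : ∀ v, labR (refl v) = eY

namespace Aut

variable {X Y Z W : Type} {eX : X} {eY : Y} {eZ : Z} {eW : W}

/-- The binding `S·T` of automata `S : X → Y` and `T : Y → Z`. -/
def bind (S : Aut X Y eX eY) (T : Aut Y Z eY eZ) : Aut X Z eX eZ where
  State := S.State × T.State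
  Motion := {p : S.Motion × T.Motion // S.labR p.1 = T.labL p.2}
  src p := (S.src p.val.1, T.src p.val.2)
  tgt p := (S.tgt p.val.1, T.tgt p.val.2)
  refl v := ⟨(S.refl v.1, T.refl v.2), by rw [S.labR_refl, T.labL_refl]⟩
  refl_src v := by simp [S.refl_src, T.refl_src]
  refl_tgt v := by simp [S.refl_tgt, T.refl_tgt]
  labL p := S.labL p.val.1
  labR p := T.labR p.val.2
  labL_refl v := S.labL_refl v.1
  labR_refl v := T.labR_refl v.2

/-- The product `S×T` of automata `S : X → Y` and `T : Z → W`. -/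
def prod (S : Aut X Y eX eY) (T : Aut Z W eZ eW) :
    Aut (X × Z) (Y × W) (eX, eZ) (eY, eW) where
  State := S.State × T.State
  Motion := S.Motion × T.Motion
  src p := (S.src p.1, T.src p.2)
  tgt p := (S.tgt p.1, T.tgt p.2)
  refl v := (S.refl v.1, T.refl v.2)
  refl_src v := by simp [S.refl_src, T.refl_src]
  refl_tgt v := by simp [S.refl_tgt, T.refl_tgt]
  labL p := (S.labL p.1, T.labL p.2)
  labR p := (S.labR p.1, T.labR p.2)
  labL_refl v := by simp [S.labL_refl, T.labL_refl]
  labR_refl v := by simp [S.labR_refl, T.labR_refl]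

/-- The feedback `fb_Y S` of an automaton `S : X×Y → Y×Z`. -/
def fb (S : Aut (X × Y) (Y × Z) (eX, eY) (eY, eZ)) : Aut X Z eX eZ where
  State := S.State
  Motion := {e : S.Motion // (S.labL e).2 = (S.labR e).1}
  src e := S.src e.val
  tgt e := S.tgt e.val
  refl v := ⟨S.refl v, by rw [S.labL_refl, S.labR_refl]⟩
  refl_src v := S.refl_src v
  refl_tgt v := S.refl_tgt v
  labL e := (S.labL e.val).1
  labR e := (S.labR e.val).2
  labL_refl v := by simp [S.labL_refl]
  labR_refl v := by simp [S.labR_refl]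

/-- The identity automaton on an action set `X`. -/
def ident (X : Type) (eX : X) : Aut X X eX eX where
  State := PUnit
  Motion := X
  src _ := PUnit.unit
  tgt _ := PUnit.unit
  refl _ := eX
  refl_src _ := rfl
  refl_tgt _ := rfl
  labL x := x
  labR x := x
  labL_refl _ := rfl
  labR_refl _ := rfl

end Aut

/-- `IsPath A v l w` : the list of motions `l` is a finite behaviour of `A`
from the state `v` ending at the state `w`. -/
def IsPath {X Y : Type} {eX : X} {eY : Y} (A : Aut X Y eX eY) :
    A.State → List A.Motion → A.State → Prop
  | v, [], w => v = w
  | v, e :: l, w => A.src e = v ∧ IsPath A (A.tgt e) l w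

/-- `w` is reachable from `v`: there is a finite (possibly empty) behaviour from `v` to `w`. -/
def Reaches {X Y : Type} {eX : X} {eY : Y} (A : Aut X Y eX eY) (v w : A.State) : Prop :=
  ∃ l, IsPath A v l w

/-- A state is a deadlock if the only motion out of it is the reflexive motion. -/
def Deadlock {X Y : Type} {eX : X} {eY : Y} (A : Aut X Y eX eY) (v : A.State) : Prop :=
  ∀ e, A.src e = v → e = A.refl v

/-- A behaviour (finite or infinite) of `A` from the state `v0`, encoded as a
finite-or-infinite sequence `Stream'.Seq` of motions. -/
def IsBehaviour {X Y : Type} {eX : X} {eY : Y} (A : Aut X Y eX eY) (v0 : A.State)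
    (s : Stream'.Seq A.Motion) : Prop :=
  (∀ e, s.get? 0 = some e → A.src e = v0) ∧
  (∀ k e f, s.get? k = some e → s.get? (k + 1) = some f → A.src f = A.tgt e)

/-- A comparison of automata: maps on states and motions preserving sources,
targets, reflexive motions and boundary labels. -/
structure Comparison {X Y : Type} {eX : X} {eY : Y} (S T : Aut X Y eX eY) where
  onState : S.State → T.State
  onMotion : S.Motion → T.Motion
  src_eq : ∀ e, T.src (onMotion e) = onState (S.src e)
  tgt_eq : ∀ e, T.tgt (onMotion e) = onState (S.tgt e)
  refl_eq : ∀ v, onMotion (S.refl v) = T.refl (onState v)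
  labL_eq : ∀ e, T.labL (onMotion e) = S.labL e
  labR_eq : ∀ e, T.labR (onMotion e) = S.labR e

/-- An isomorphism of automata: bijections on states and motions preserving sources,
targets, reflexive motions and boundary labels. -/
structure AutIso {X Y : Type} {eX : X} {eY : Y} (S T : Aut X Y eX eY) where
  stateEquiv : S.State ≃ T.State
  motionEquiv : S.Motion ≃ T.Motion
  src_eq : ∀ e, T.src (motionEquiv e) = stateEquiv (S.src e)
  tgt_eq : ∀ e, T.tgt (motionEquiv e) = stateEquiv (S.tgt e)
  refl_eq : ∀ v, motionEquiv (S.refl v) = T.refl (stateEquiv v)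
  labL_eq : ∀ e, T.labL (motionEquiv e) = S.labL e
  labR_eq : ∀ e, T.labR (motionEquiv e) = S.labR e

/-- The reachable subautomaton `r(A)` of `A` with initial state `v0`. -/
def reach {X Y : Type} {eX : X} {eY : Y} (A : Aut X Y eX eY) (v0 : A.State) :
    Aut X Y eX eY where
  State := {v : A.State // Reaches A v0 v}
  Motion := {e : A.Motion // Reaches A v0 (A.src e) ∧ Reaches A v0 (A.tgt e)}
  src e := ⟨A.src e.val, e.property.1⟩
  tgt e := ⟨A.tgt e.val, e.property.2⟩
  refl v := ⟨A.refl v.val, by rw [A.refl_src, A.refl_tgt]; exact ⟨v.property, v.property⟩⟩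
  refl_src v := Subtype.ext (A.refl_src v.val)
  refl_tgt v := Subtype.ext (A.refl_tgt v.val)
  labL e := A.labL e.val
  labR e := A.labR e.val
  labL_refl v := A.labL_refl v.val
  labR_refl v := A.labR_refl v.val

/-- The initial state of `A`, as a state of the reachable subautomaton `r(A)`. -/
def reachInit {X Y : Type} {eX : X} {eY : Y} (A : Aut X Y eX eY) (v0 : A.State) :
    (reach A v0).State :=
  ⟨v0, ⟨[], rfl⟩⟩

/-- A simulation `S ⇒ T` of automata with initial states: a comparison
`r(S) → r(T)` preserving the initial state and satisfying the lifting property. -/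
structure Simulation {X Y : Type} {eX : X} {eY : Y} (S T : Aut X Y eX eY)
    (v0 : S.State) (w0 : T.State) where
  comp : Comparison (reach S v0) (reach T w0)
  init : (comp.onState (reachInit S v0)).val = w0
  lift : ∀ (v : (reach S v0).State) (e : (reach T w0).Motion),
      (reach T w0).src e = comp.onState v →
      ∃ (l : List ((reach S v0).Motion)) (e' : (reach S v0).Motion)
        (v' : (reach S v0).State),
        IsPath (reach S v0) v (l ++ [e']) v' ∧
        (∀ m ∈ l, comp.onMotion m = (reach T w0).refl (comp.onState v)) ∧
        comp.onMotion e' = e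


section BindingBij

open Stream'

variable {X Y Z : Type} {eX : X} {eY : Y} {eZ : Z}
variable (S : Aut X Y eX eY) (T : Aut Y Z eY eZ)

open Classical in
/-- Zip two label-compatible sequences into a sequence of bound motions. -/
noncomputable def zipFn (s : Stream'.Seq S.Motion) (t : Stream'.Seq T.Motion) :
    Stream' (Option (S.bind T).Motion) := fun n =>
  match s.get? n, t.get? n with
  | some e, some f => if h : S.labR e = T.labL f then some ⟨(e, f), h⟩ else none
  | _, _ => none

theorem zipFn_none {s : Stream'.Seq S.Motion} {t : Stream'.Seq T.Motion}
    (h3 : ∀ k, (s.get? k).isSome ↔ (t.get? k).isSome) {n : ℕ}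
    (hn : s.get? n = none) : zipFn S T s t n = none := by
  have ht : t.get? n = none := by
    cases htn : t.get? n with
    | none => rfl
    | some f =>
      have := (h3 n).mpr (by simp [htn])
      simp [hn] at this
  simp [zipFn, hn, ht]

theorem zipFn_some {s : Stream'.Seq S.Motion} {t : Stream'.Seq T.Motion}
    (h3 : ∀ k, (s.get? k).isSome ↔ (t.get? k).isSome)
    (h4 : s.map S.labR = t.map T.labL) {n : ℕ} {e : S.Motion}
    (hn : s.get? n = some e) :
    ∃ (f : T.Motion) (h : S.labR e = T.labL f),
      t.get? n = some f ∧ zipFn S T s t n = some ⟨(e, f), h⟩ := by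
  have ht : (t.get? n).isSome := (h3 n).mp (by simp [hn])
  obtain ⟨f, hf⟩ := Option.isSome_iff_exists.mp ht
  have h4' : (s.get? n).map S.labR = (t.get? n).map T.labL := by
    rw [← Seq.map_get?, ← Seq.map_get?, h4]
  rw [hn, hf] at h4'
  simp only [Option.map_some, Option.some.injEq] at h4'
  exact ⟨f, h4', hf, by simp [zipFn, hn, hf, h4']⟩

/-- The zipped sequence. -/
noncomputable def zipSeq (s : Stream'.Seq S.Motion) (t : Stream'.Seq T.Motion)
    (h3 : ∀ k, (s.get? k).isSome ↔ (t.get? k).isSome)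
    (h4 : s.map S.labR = t.map T.labL) : Stream'.Seq (S.bind T).Motion :=
  ⟨zipFn S T s t, by
    intro n hn
    cases hs : s.get? n with
    | none => exact zipFn_none S T h3 (s.2 hs)
    | some e =>
      obtain ⟨f, h, _, hz⟩ := zipFn_some S T h3 h4 hs
      rw [hn] at hz; cases hz⟩

theorem zipSeq_get? (s : Stream'.Seq S.Motion) (t : Stream'.Seq T.Motion)
    (h3 : ∀ k, (s.get? k).isSome ↔ (t.get? k).isSome)
    (h4 : s.map S.labR = t.map T.labL) (n : ℕ) :
    ((zipSeq S T s t h3 h4).get? n).map (fun m => m.val.1) = s.get? n ∧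
    ((zipSeq S T s t h3 h4).get? n).map (fun m => m.val.2) = t.get? n := by
  have hg : (zipSeq S T s t h3 h4).get? n = zipFn S T s t n := rfl
  cases hs : s.get? n with
  | none =>
    have ht : t.get? n = none := by
      cases htn : t.get? n with
      | none => rfl
      | some f =>
        have := (h3 n).mpr (by simp [htn])
        simp [hs] at this
    rw [hg, zipFn_none S T h3 hs]
    simp [ht]
  | some e =>
    obtain ⟨f, h, hf, hz⟩ := zipFn_some S T h3 h4 hs
    rw [hg, hz]
    simp [hf]
    exact ⟨⟨_, rfl, rfl⟩, ⟨_, rfl, rfl⟩⟩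

end BindingBij

/-- Behaviours of the binding `S·T` from `(v₀,w₀)` correspond bijectively
to pairs of behaviours of `S` from `v₀` and of `T` from `w₀` of the same length and with
the same appearance on the common boundary `Y`; the correspondence is componentwise. -/
theorem binding_behaviour_bijection {X Y Z : Type} {eX : X} {eY : Y} {eZ : Z}
    (S : Aut X Y eX eY) (T : Aut Y Z eY eZ) (v0 : S.State) (w0 : T.State) :
    ∃ Φ : {β : Stream'.Seq (S.bind T).Motion // IsBehaviour (S.bind T) (v0, w0) β} ≃
        {p : Stream'.Seq S.Motion × Stream'.Seq T.Motion //
          IsBehaviour S v0 p.1 ∧ IsBehaviour T w0 p.2 ∧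
          (∀ k, (p.1.get? k).isSome ↔ (p.2.get? k).isSome) ∧
          p.1.map S.labR = p.2.map T.labL},
      ∀ β k, ((Φ β).val.1.get? k = (β.val.get? k).map (fun m => m.val.1)) ∧
        ((Φ β).val.2.get? k = (β.val.get? k).map (fun m => m.val.2)) := by
  classical
  have bsrc : ∀ m : (S.bind T).Motion, (S.bind T).src m = (S.src m.val.1, T.src m.val.2) :=
    fun _ => rfl
  have btgt : ∀ m : (S.bind T).Motion, (S.bind T).tgt m = (S.tgt m.val.1, T.tgt m.val.2) :=
    fun _ => rfl
  refine ⟨{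
    toFun := fun β => ⟨(β.val.map (fun m => m.val.1), β.val.map (fun m => m.val.2)),
      ?_, ?_, ?_, ?_⟩
    invFun := fun p => ⟨zipSeq S T p.val.1 p.val.2 p.property.2.2.1 p.property.2.2.2, ?_, ?_⟩
    left_inv := ?_
    right_inv := ?_ }, ?_⟩
  · -- behaviour of S
    obtain ⟨β, hb0, hbk⟩ := β
    constructor
    · intro e he
      simp only [Stream'.Seq.map_get?] at he
      obtain ⟨m, hm, rfl⟩ := Option.map_eq_some_iff.mp he
      have := hb0 m hm
      rw [bsrc] at this
      exact (Prod.mk.injEq _ _ _ _).mp this |>.1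
    · intro k e f he hf
      simp only [Stream'.Seq.map_get?] at he hf
      obtain ⟨m, hm, rfl⟩ := Option.map_eq_some_iff.mp he
      obtain ⟨m', hm', rfl⟩ := Option.map_eq_some_iff.mp hf
      have := hbk k m m' hm hm'
      rw [bsrc, btgt] at this
      exact (Prod.mk.injEq _ _ _ _).mp this |>.1
  · -- behaviour of T
    obtain ⟨β, hb0, hbk⟩ := β
    constructor
    · intro e he
      simp only [Stream'.Seq.map_get?] at he
      obtain ⟨m, hm, rfl⟩ := Option.map_eq_some_iff.mp he
      have := hb0 m hm
      rw [bsrc] at this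
      exact (Prod.mk.injEq _ _ _ _).mp this |>.2
    · intro k e f he hf
      simp only [Stream'.Seq.map_get?] at he hf
      obtain ⟨m, hm, rfl⟩ := Option.map_eq_some_iff.mp he
      obtain ⟨m', hm', rfl⟩ := Option.map_eq_some_iff.mp hf
      have := hbk k m m' hm hm'
      rw [bsrc, btgt] at this
      exact (Prod.mk.injEq _ _ _ _).mp this |>.2
  · -- same length
    intro k
    simp [Stream'.Seq.map_get?]
  · -- same appearance on Y
    apply Stream'.Seq.ext
    intro n
    simp only [Stream'.Seq.map_get?, Option.map_map]
    cases β.val.get? n with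
    | none => rfl
    | some m => simp [Function.comp, m.property]
  · -- invFun gives a behaviour: src condition
    intro m hm
    obtain ⟨⟨s, t⟩, h1, h2, h3, h4⟩ := p
    have := zipSeq_get? S T s t h3 h4 0
    rw [hm] at this
    simp only [Option.map_some] at this
    rw [bsrc]
    exact Prod.ext (h1.1 m.val.1 this.1.symm) (h2.1 m.val.2 this.2.symm)
  · -- invFun behaviour: step condition
    intro k m m' hm hm'
    obtain ⟨⟨s, t⟩, h1, h2, h3, h4⟩ := p
    have hk := zipSeq_get? S T s t h3 h4 k
    have hk1 := zipSeq_get? S T s t h3 h4 (k + 1)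
    rw [hm] at hk; rw [hm'] at hk1
    simp only [Option.map_some] at hk hk1
    rw [bsrc, btgt]
    exact Prod.ext (h1.2 k m.val.1 m'.val.1 hk.1.symm hk1.1.symm)
      (h2.2 k m.val.2 m'.val.2 hk.2.symm hk1.2.symm)
  · -- left inverse
    rintro ⟨β, hβ⟩
    apply Subtype.ext
    apply Stream'.Seq.ext
    intro n
    show zipFn S T (β.map (fun m => m.val.1)) (β.map (fun m => m.val.2)) n = β.get? n
    cases hb : β.get? n with
    | none =>
      exact zipFn_none S T (by intro k; simp [Stream'.Seq.map_get?])
        (by simp [Stream'.Seq.map_get?, hb])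
    | some m =>
      have hs : (β.map (fun m => m.val.1)).get? n = some m.val.1 := by
        simp [Stream'.Seq.map_get?, hb]
      have ht : (β.map (fun m => m.val.2)).get? n = some m.val.2 := by
        simp [Stream'.Seq.map_get?, hb]
      simp [zipFn, hs, ht, m.property, hb]
      rfl
  · -- right inverse
    rintro ⟨⟨s, t⟩, h1, h2, h3, h4⟩
    apply Subtype.ext
    have e1 : (zipSeq S T s t h3 h4).map (fun m => m.val.1) = s := by
      apply Stream'.Seq.ext
      intro n
      rw [Stream'.Seq.map_get?]
      exact (zipSeq_get? S T s t h3 h4 n).1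
    have e2 : (zipSeq S T s t h3 h4).map (fun m => m.val.2) = t := by
      apply Stream'.Seq.ext
      intro n
      rw [Stream'.Seq.map_get?]
      exact (zipSeq_get? S T s t h3 h4 n).2
    exact Prod.ext e1 e2
  · -- componentwise description
    intro β k
    constructor <;> simp [Stream'.Seq.map_get?]
end

section
/- For automata with boundary S : X → Y and T : Y → Z, the automata fb_Y(S×T) : X → Z and S·T : X → Z are isomorphic. -/
/-- For automata `S : X → Y` and `T : Y → Z`, the feedback of the product,
`fb_Y (S×T) : X → Z`, is isomorphic to the binding `S·T : X → Z`. -/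
theorem fb_prod_iso_bind {X Y Z : Type} {eX : X} {eY : Y} {eZ : Z}
    (S : Aut X Y eX eY) (T : Aut Y Z eY eZ) :
    Nonempty (AutIso (S.prod T).fb (S.bind T)) := by
  refine ⟨{
    stateEquiv := Equiv.refl _
    motionEquiv := { toFun := fun e => ⟨e.val, e.property.symm⟩
                     invFun := fun e => ⟨e.val, e.property.symm⟩
                     left_inv := fun e => rfl
                     right_inv := fun e => rfl }
    src_eq := fun e => rfl
    tgt_eq := fun e => rfl
    refl_eq := fun v => rfl
    labL_eq := fun e => rfl
    labR_eq := fun e => rfl }⟩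
end

section
/- Let S : X → Y and T : Z → W be automata with boundary with initial states v₀ and w₀. If the product S×T has a deadlock state reachable from (v₀,w₀), then there exist a deadlock state v* of S and a deadlock state w* of T such that (v*,w*) is a deadlock state of S×T reachable from (v₀,w₀); moreover, (v*,w*) is reachable from (v₀,w₀) by a finite behaviour which is the concatenation of a behaviour from (v₀,w₀) to (v*,w₀) all of whose motions have reflexive T-component, followed by a behaviour from (v*,w₀) to (v*,w*) all of whose motions have reflexive S-component. -/
theorem isPath_append {X Y : Type} {eX : X} {eY : Y} (A : Aut X Y eX eY) :
    ∀ (l₁ : List A.Motion) {v u w : A.State} (l₂ : List A.Motion),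
      IsPath A v l₁ u → IsPath A u l₂ w → IsPath A v (l₁ ++ l₂) w
  | [], v, u, w, l₂, h1, h2 => by cases h1; exact h2
  | e :: l, v, u, w, l₂, h1, h2 =>
    ⟨h1.1, isPath_append A l l₂ h1.2 h2⟩

theorem isPath_proj1 {X Y Z W : Type} {eX : X} {eY : Y} {eZ : Z} {eW : W}
    (S : Aut X Y eX eY) (T : Aut Z W eZ eW) :
    ∀ (l : List (S.prod T).Motion) (p q : (S.prod T).State),
      IsPath (S.prod T) p l q → IsPath S p.1 (l.map Prod.fst) q.1
  | [], p, q, h => by cases h; rfl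
  | e :: l, p, q, h =>
    ⟨congrArg Prod.fst h.1, isPath_proj1 S T l _ q h.2⟩

theorem isPath_proj2 {X Y Z W : Type} {eX : X} {eY : Y} {eZ : Z} {eW : W}
    (S : Aut X Y eX eY) (T : Aut Z W eZ eW) :
    ∀ (l : List (S.prod T).Motion) (p q : (S.prod T).State),
      IsPath (S.prod T) p l q → IsPath T p.2 (l.map Prod.snd) q.2
  | [], p, q, h => by cases h; rfl
  | e :: l, p, q, h =>
    ⟨congrArg Prod.snd h.1, isPath_proj2 S T l _ q h.2⟩

theorem isPath_lift1 {X Y Z W : Type} {eX : X} {eY : Y} {eZ : Z} {eW : W}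
    (S : Aut X Y eX eY) (T : Aut Z W eZ eW) (w : T.State) :
    ∀ (l : List S.Motion) (v v' : S.State),
      IsPath S v l v' →
      IsPath (S.prod T) (v, w) (l.map (fun e => (e, T.refl w))) (v', w)
  | [], v, v', h => by cases h; rfl
  | e :: l, v, v', h => by
    refine ⟨?_, ?_⟩
    · show (S.src e, T.src (T.refl w)) = (v, w)
      rw [h.1, T.refl_src]
    · show IsPath (S.prod T) (S.tgt e, T.tgt (T.refl w)) _ _
      rw [T.refl_tgt]
      exact isPath_lift1 S T w l _ v' h.2

theorem isPath_lift2 {X Y Z W : Type} {eX : X} {eY : Y} {eZ : Z} {eW : W}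
    (S : Aut X Y eX eY) (T : Aut Z W eZ eW) (v : S.State) :
    ∀ (l : List T.Motion) (w w' : T.State),
      IsPath T w l w' →
      IsPath (S.prod T) (v, w) (l.map (fun e => (S.refl v, e))) (v, w')
  | [], w, w', h => by cases h; rfl
  | e :: l, w, w', h => by
    refine ⟨?_, ?_⟩
    · show (S.src (S.refl v), T.src e) = (v, w)
      rw [h.1, S.refl_src]
    · show IsPath (S.prod T) (S.tgt (S.refl v), T.tgt e) _ _
      rw [S.refl_tgt]
      exact isPath_lift2 S T v l _ w' h.2

/-- If the product `S×T` has a deadlock reachable from `(v₀,w₀)`, then it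
has a reachable deadlock `(v*,w*)` with `v*` a deadlock of `S` and `w*` a deadlock of `T`,
reachable by a finite behaviour which is the concatenation of a behaviour from `(v₀,w₀)`
to `(v*,w₀)` all of whose motions have reflexive `T`-component, followed by a behaviour
from `(v*,w₀)` to `(v*,w*)` all of whose motions have reflexive `S`-component. -/
theorem product_deadlock {X Y Z W : Type} {eX : X} {eY : Y} {eZ : Z} {eW : W}
    (S : Aut X Y eX eY) (T : Aut Z W eZ eW) (v0 : S.State) (w0 : T.State)
    (h : ∃ d : (S.prod T).State, Deadlock (S.prod T) d ∧ Reaches (S.prod T) (v0, w0) d) :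
    ∃ (v : S.State) (w : T.State), Deadlock S v ∧ Deadlock T w ∧
      Deadlock (S.prod T) (v, w) ∧
      ∃ (l₁ l₂ : List (S.prod T).Motion),
        IsPath (S.prod T) (v0, w0) (l₁ ++ l₂) (v, w) ∧
        IsPath (S.prod T) (v0, w0) l₁ (v, w0) ∧
        IsPath (S.prod T) (v, w0) l₂ (v, w) ∧
        (∀ m ∈ l₁, m.2 = T.refl (T.src m.2)) ∧
        (∀ m ∈ l₂, m.1 = S.refl (S.src m.1)) := by

  obtain ⟨⟨d1, d2⟩, hd, ⟨lp, hlp⟩⟩ := h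
  have hdS : Deadlock S d1 := fun e he => by
    have := hd (e, T.refl d2) (by show (S.src e, T.src (T.refl d2)) = _; rw [he, T.refl_src])
    exact congrArg Prod.fst this
  have hdT : Deadlock T d2 := fun e he => by
    have := hd (S.refl d1, e) (by show (S.src (S.refl d1), T.src e) = _; rw [he, S.refl_src])
    exact congrArg Prod.snd this
  refine ⟨d1, d2, hdS, hdT, hd, ?_⟩
  have hS := isPath_proj1 S T lp (v0, w0) (d1, d2) hlp
  have hT := isPath_proj2 S T lp (v0, w0) (d1, d2) hlp
  refine ⟨(lp.map Prod.fst).map (fun e => (e, T.refl w0)),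
          (lp.map Prod.snd).map (fun e => (S.refl d1, e)), ?_, ?_, ?_, ?_, ?_⟩
  · exact isPath_append (S.prod T) _ _ (isPath_lift1 S T w0 _ _ _ hS)
      (isPath_lift2 S T d1 _ _ _ hT)
  · exact isPath_lift1 S T w0 _ _ _ hS
  · exact isPath_lift2 S T d1 _ _ _ hT
  · intro m hm
    replace hm := List.mem_map.1 hm
    obtain ⟨e, -, rfl⟩ := hm
    simp [T.refl_src]
  · intro m hm
    replace hm := List.mem_map.1 hm
    obtain ⟨e, -, rfl⟩ := hm
    simp [S.refl_src]
end

section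
/- Let S : X → Y and T : Y → Z be automata with boundary. Let v be a state of S that is not a deadlock and such that S ignores the boundary Y in state v, and let w be any state of T. If there is a finite behaviour of the binding S·T from (v,w) ending at a deadlock state (v*,w*) of S·T, then there is a finite behaviour of S·T from (v,w) ending at (v*,w*) whose first non-reflexive motion has non-reflexive S-component and reflexive T-component. -/
lemma path_drop_refl {X Y : Type} {eX : X} {eY : Y} (A : Aut X Y eX eY) :
    ∀ (pre : List A.Motion) (u w : A.State) (l : List A.Motion),
    IsPath A u (pre ++ l) w → (∀ m ∈ pre, m = A.refl (A.src m)) → IsPath A u l w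
  | [], _, _, _, h, _ => h
  | m :: pre, u, w, l, h, hrefl => by
      have h1 : A.src m = u := h.1
      have hm := hrefl m List.mem_cons_self
      have h2 : A.tgt m = u := by rw [hm, A.refl_tgt, h1]
      exact path_drop_refl A pre u w l (h2 ▸ h.2)
        (fun m hm => hrefl m (List.mem_cons_of_mem _ hm))

lemma bind_ne_refl {X Y Z : Type} {eX : X} {eY : Y} {eZ : Z}
    {S : Aut X Y eX eY} {T : Aut Y Z eY eZ} {m : (S.bind T).Motion}
    (h : m.val.1 ≠ S.refl (S.src m.val.1)) :
    m ≠ (S.bind T).refl ((S.bind T).src m) := by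
  intro heq
  apply h
  conv_lhs => rw [heq]
  rfl

/-- If `v` is a non-deadlock state of `S` in which `S` ignores the common
boundary `Y`, and a deadlock `(v*,w*)` of the binding `S·T` is reachable from `(v,w)` by a
finite behaviour, then it is reachable from `(v,w)` by a finite behaviour whose first
non-reflexive motion has non-reflexive `S`-component and reflexive `T`-component. -/
theorem can_move_S {X Y Z : Type} {eX : X} {eY : Y} {eZ : Z}
    (S : Aut X Y eX eY) (T : Aut Y Z eY eZ)
    (v : S.State) (w : T.State)
    (hv : ¬ Deadlock S v)
    (hignore : ∀ e, S.src e = v → S.labR e = eY)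
    (vs : S.State) (ws : T.State)
    (hdead : Deadlock (S.bind T) (vs, ws))
    (hreach : ∃ l, IsPath (S.bind T) (v, w) l (vs, ws)) :
    ∃ (pre : List (S.bind T).Motion) (m : (S.bind T).Motion)
      (post : List (S.bind T).Motion),
      IsPath (S.bind T) (v, w) (pre ++ m :: post) (vs, ws) ∧
      (∀ m' ∈ pre, m' = (S.bind T).refl ((S.bind T).src m')) ∧
      m ≠ (S.bind T).refl ((S.bind T).src m) ∧
      m.val.1 ≠ S.refl (S.src m.val.1) ∧
      m.val.2 = T.refl (T.src m.val.2) := by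
  obtain ⟨l, hl⟩ := hreach
  induction l generalizing w with
  | nil =>
    exfalso
    have hl : (v, w) = ((vs, ws) : S.State × T.State) := hl
    rw [Prod.mk.injEq] at hl
    obtain ⟨e, he, hne⟩ := by
      have := hv
      unfold Deadlock at this
      push_neg at this
      exact this
    have hcompat : S.labR e = T.labL (T.refl ws) := by
      rw [hignore e he, T.labL_refl]
    set m : (S.bind T).Motion := ⟨(e, T.refl ws), hcompat⟩ with hmdef
    have hsrc : (S.bind T).src m = (vs, ws) := by
      show (S.src e, T.src (T.refl ws)) = (vs, ws)
      rw [he, hl.1, T.refl_src]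
    have := hdead m hsrc
    apply hne
    have : m.val.1 = ((S.bind T).refl (vs, ws)).val.1 := by rw [this]
    rw [hl.1]
    exact this
  | cons m0 rest ih =>
    have hsrc0 : (S.bind T).src m0 = (v, w) := hl.1
    have hrest : IsPath (S.bind T) ((S.bind T).tgt m0) rest (vs, ws) := hl.2
    have hsrc1 : S.src m0.val.1 = v := congrArg Prod.fst hsrc0
    have hsrc2 : T.src m0.val.2 = w := congrArg Prod.snd hsrc0
    by_cases hr : m0 = (S.bind T).refl ((S.bind T).src m0)
    · -- reflexive first motion: recurse and prepend
      have htgt : (S.bind T).tgt m0 = (v, w) := by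
        rw [hr, (S.bind T).refl_tgt, hsrc0]
      obtain ⟨pre, m, post, hp, hpre, h1, h2, h3⟩ := ih w (htgt ▸ hrest)
      exact ⟨m0 :: pre, m, post,
        ⟨hsrc0, htgt ▸ hp⟩,
        fun m' hm' => by
          rcases List.mem_cons.mp hm' with h | h
          · rw [h]; exact hr
          · exact hpre m' h,
        h1, h2, h3⟩
    · by_cases hr2 : m0.val.2 = T.refl (T.src m0.val.2)
      · -- first motion already has reflexive T-component
        refine ⟨[], m0, rest, hl, by simp, hr, ?_, hr2⟩
        intro h1
        apply hr
        apply Subtype.ext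
        show m0.val = (S.refl (S.src m0.val.1), T.refl (T.src m0.val.2))
        rw [← h1, ← hr2]
      · by_cases hr1 : m0.val.1 = S.refl (S.src m0.val.1)
        · -- S-component reflexive, T-component not: recurse past m0, then swap
          have htgt1 : S.tgt m0.val.1 = v := by rw [hr1, S.refl_tgt, hsrc1]
          have htgt0 : (S.bind T).tgt m0 = (v, T.tgt m0.val.2) := by
            show (S.tgt m0.val.1, T.tgt m0.val.2) = _
            rw [htgt1]
          obtain ⟨pre, m, post, hp, hpre, hm1, hm2, hm3⟩ :=
            ih (T.tgt m0.val.2) (htgt0 ▸ hrest)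
          have hp' : IsPath (S.bind T) (v, T.tgt m0.val.2) (m :: post) (vs, ws) :=
            path_drop_refl _ pre _ _ _ hp hpre
          have hsrcm : (S.bind T).src m = (v, T.tgt m0.val.2) := hp'.1
          have hsrcm1 : S.src m.val.1 = v := congrArg Prod.fst hsrcm
          have hsrcm2 : T.src m.val.2 = T.tgt m0.val.2 := congrArg Prod.snd hsrcm
          have hc1 : S.labR m.val.1 = T.labL (T.refl w) := by
            rw [hignore _ hsrcm1, T.labL_refl]
          have hc2 : S.labR (S.refl (S.tgt m.val.1)) = T.labL m0.val.2 := by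
            rw [S.labR_refl, ← m0.property, hr1, S.labR_refl]
          refine ⟨[], ⟨(m.val.1, T.refl w), hc1⟩,
            ⟨(S.refl (S.tgt m.val.1), m0.val.2), hc2⟩ :: post, ?_, by simp, ?_, ?_, ?_⟩
          · refine ⟨?_, ?_, ?_⟩
            · show (S.src m.val.1, T.src (T.refl w)) = (v, w)
              rw [hsrcm1, T.refl_src]
            · show (S.src (S.refl (S.tgt m.val.1)), T.src m0.val.2)
                = (S.tgt m.val.1, T.tgt (T.refl w))
              rw [S.refl_src, hsrc2, T.refl_tgt]
            · have : (S.bind T).tgt m = (S.tgt m.val.1, T.tgt m0.val.2) := by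
                show (S.tgt m.val.1, T.tgt m.val.2) = _
                rw [hm3, hsrcm2, T.refl_tgt]
              have h2 := hp'.2
              rw [this] at h2
              show IsPath (S.bind T) (S.tgt (S.refl (S.tgt m.val.1)), T.tgt m0.val.2)
                post (vs, ws)
              rw [S.refl_tgt]
              exact h2
            -- remaining side conditions
          · exact bind_ne_refl hm2
          · exact hm2
          · show T.refl w = T.refl (T.src (T.refl w))
            rw [T.refl_src]
        · -- S-component non-reflexive: split m0 into S-part then T-part
          have hc1 : S.labR m0.val.1 = T.labL (T.refl w) := by
            rw [hignore _ hsrc1, T.labL_refl]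
          have hc2 : S.labR (S.refl (S.tgt m0.val.1)) = T.labL m0.val.2 := by
            rw [S.labR_refl, ← m0.property, hignore _ hsrc1]
          refine ⟨[], ⟨(m0.val.1, T.refl w), hc1⟩,
            ⟨(S.refl (S.tgt m0.val.1), m0.val.2), hc2⟩ :: rest, ?_, by simp, ?_, ?_, ?_⟩
          · refine ⟨?_, ?_, ?_⟩
            · show (S.src m0.val.1, T.src (T.refl w)) = (v, w)
              rw [hsrc1, T.refl_src]
            · show (S.src (S.refl (S.tgt m0.val.1)), T.src m0.val.2)
                = (S.tgt m0.val.1, T.tgt (T.refl w))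
              rw [S.refl_src, hsrc2, T.refl_tgt]
            · show IsPath (S.bind T) (S.tgt (S.refl (S.tgt m0.val.1)), T.tgt m0.val.2)
                rest (vs, ws)
              rw [S.refl_tgt]
              exact hrest
          · exact bind_ne_refl hr1
          · exact hr1
          · show T.refl w = T.refl (T.src (T.refl w))
            rw [T.refl_src]
end

section
/- Given a simulation f : S ⇒ T between automata S, T : X×Y → Y×Z with initial states, the restriction of f to the reachable subautomata of the feedbacks defines a simulation fb_Y f : fb_Y S ⇒ fb_Y T (the feedbacks being equipped with the same initial states). -/
namespace FbSimAux

lemma isPath_append {X Y : Type} {eX : X} {eY : Y} (A : Aut X Y eX eY) :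
    ∀ (l l' : List A.Motion) (v w u : A.State),
      IsPath A v l w → IsPath A w l' u → IsPath A v (l ++ l') u := by
  intro l
  induction l with
  | nil => intro l' v w u h1 h2; cases h1; exact h2
  | cons e l ih =>
    intro l' v w u h1 h2
    exact ⟨h1.1, ih l' _ w u h1.2 h2⟩

lemma reaches_step {X Y : Type} {eX : X} {eY : Y} {A : Aut X Y eX eY} {v0 : A.State}
    (e : A.Motion) (h : Reaches A v0 (A.src e)) : Reaches A v0 (A.tgt e) := by
  obtain ⟨l, hl⟩ := h
  exact ⟨l ++ [e], isPath_append A l [e] _ _ _ hl ⟨rfl, rfl⟩⟩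

variable {X Y Z : Type} {eX : X} {eY : Y} {eZ : Z}

lemma isPath_fb_down (S : Aut (X × Y) (Y × Z) (eX, eY) (eY, eZ)) :
    ∀ (l : List S.fb.Motion) (v w : S.State), IsPath S.fb v l w →
      IsPath S v (l.map Subtype.val) w := by
  intro l
  induction l with
  | nil => intro v w h; exact h
  | cons e l ih => intro v w h; exact ⟨h.1, ih _ _ h.2⟩

lemma reaches_fb_base (S : Aut (X × Y) (Y × Z) (eX, eY) (eY, eZ))
    {v0 v : S.State} (h : Reaches S.fb v0 v) : Reaches S v0 v := by
  obtain ⟨l, hl⟩ := h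
  exact ⟨l.map Subtype.val, isPath_fb_down S l v0 v hl⟩

lemma isPath_reach_down {X' Y' : Type} {eX' : X'} {eY' : Y'}
    (A : Aut X' Y' eX' eY') (v0 : A.State) :
    ∀ (l : List (reach A v0).Motion) (v w : (reach A v0).State),
      IsPath (reach A v0) v l w → IsPath A v.val (l.map Subtype.val) w.val := by
  intro l
  induction l with
  | nil => intro v w h; exact congrArg Subtype.val h
  | cons e l ih =>
    intro v w h
    exact ⟨congrArg Subtype.val h.1, ih _ _ h.2⟩

variable (S T : Aut (X × Y) (Y × Z) (eX, eY) (eY, eZ))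
  (v0 : S.State) (w0 : T.State)

lemma image_reach_fb (f : Simulation S T v0 w0) :
    ∀ (l : List S.Motion) (v w : S.State) (hv : Reaches S v0 v) (hw : Reaches S v0 w),
      IsPath S v l w → (∀ e ∈ l, (S.labL e).2 = (S.labR e).1) →
      Reaches T.fb w0 (f.comp.onState ⟨v, hv⟩).val →
      Reaches T.fb w0 (f.comp.onState ⟨w, hw⟩).val := by
  intro l
  induction l with
  | nil =>
    intro v w hv hw hp _ hr
    cases hp
    exact hr
  | cons e l ih =>
    intro v w hv hw hp hfb hr
    obtain ⟨hsrc, hp'⟩ := hp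
    subst hsrc
    have htgt : Reaches S v0 (S.tgt e) := reaches_step e hv
    have hcond : (T.labL (f.comp.onMotion ⟨e, hv, htgt⟩).val).2
        = (T.labR (f.comp.onMotion ⟨e, hv, htgt⟩).val).1 := by
      have h1 : T.labL (f.comp.onMotion ⟨e, hv, htgt⟩).val = S.labL e :=
        f.comp.labL_eq ⟨e, hv, htgt⟩
      have h2 : T.labR (f.comp.onMotion ⟨e, hv, htgt⟩).val = S.labR e :=
        f.comp.labR_eq ⟨e, hv, htgt⟩
      rw [h1, h2]
      exact hfb e List.mem_cons_self
    have hsrc' : T.src (f.comp.onMotion ⟨e, hv, htgt⟩).val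
        = (f.comp.onState ⟨S.src e, hv⟩).val :=
      congrArg Subtype.val (f.comp.src_eq ⟨e, hv, htgt⟩)
    have hrs : Reaches T.fb w0
        (T.fb.src (⟨(f.comp.onMotion ⟨e, hv, htgt⟩).val, hcond⟩ : T.fb.Motion)) := by
      show Reaches T.fb w0 (T.src (f.comp.onMotion ⟨e, hv, htgt⟩).val)
      rw [hsrc']; exact hr
    have hrt := reaches_step (A := T.fb) (v0 := w0) (⟨(f.comp.onMotion ⟨e, hv, htgt⟩).val, hcond⟩ : T.fb.Motion) hrs
    have htgt' : T.tgt (f.comp.onMotion ⟨e, hv, htgt⟩).val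
        = (f.comp.onState ⟨S.tgt e, htgt⟩).val :=
      congrArg Subtype.val (f.comp.tgt_eq ⟨e, hv, htgt⟩)
    exact ih (S.tgt e) w htgt hw hp'
      (fun e' he' => hfb e' (List.mem_cons_of_mem _ he'))
      (by rw [← htgt']; exact hrt)

lemma reach_image (f : Simulation S T v0 w0) :
    ∀ (v : S.State) (hv : Reaches S.fb v0 v) (hv' : Reaches S v0 v),
      Reaches T.fb w0 (f.comp.onState ⟨v, hv'⟩).val := by
  intro v hv hv'
  obtain ⟨l, hl⟩ := hv
  have hp := isPath_fb_down S l v0 v hl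
  have hfb : ∀ m ∈ l.map Subtype.val, (S.labL m).2 = (S.labR m).1 := by
    intro m hm
    obtain ⟨m', _, rfl⟩ := List.mem_map.mp hm
    exact m'.property
  have h0 : Reaches S v0 v0 := ⟨[], rfl⟩
  have hw0 : Reaches T.fb w0 (f.comp.onState ⟨v0, h0⟩).val := by
    have hi : (f.comp.onState ⟨v0, h0⟩).val = w0 := f.init
    rw [hi]; exact ⟨[], rfl⟩
  exact image_reach_fb S T v0 w0 f (l.map Subtype.val) v0 v h0 hv' hp hfb hw0

lemma lift_path_fb :
    ∀ (L : List S.Motion) (v w : S.State), IsPath S v L w →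
      (∀ m ∈ L, (S.labL m).2 = (S.labR m).1) →
      ∀ hv : Reaches S.fb v0 v,
      ∃ (hw : Reaches S.fb v0 w) (L' : List (reach S.fb v0).Motion),
        IsPath (reach S.fb v0) ⟨v, hv⟩ L' ⟨w, hw⟩ ∧
        L'.map (fun m => m.val.val) = L := by
  intro L
  induction L with
  | nil =>
    intro v w hp _ hv
    cases hp
    exact ⟨hv, [], rfl, rfl⟩
  | cons e L ih =>
    intro v w hp hfb hv
    obtain ⟨hsrc, hp'⟩ := hp
    subst hsrc
    have hcond := hfb e List.mem_cons_self
    have hvs : Reaches S.fb v0 (S.fb.src (⟨e, hcond⟩ : S.fb.Motion)) := hv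
    have hvt : Reaches S.fb v0 (S.tgt e) := by
      have := reaches_step (A := S.fb) (v0 := v0) (⟨e, hcond⟩ : S.fb.Motion) hvs
      exact this
    obtain ⟨hw, L', hpath, hmap⟩ := ih (S.tgt e) w hp'
      (fun m hm => hfb m (List.mem_cons_of_mem _ hm)) hvt
    exact ⟨hw, ⟨⟨e, hcond⟩, hvs, hvt⟩ :: L', ⟨rfl, hpath⟩, congrArg (List.cons e) hmap⟩

/-- Lift a motion of `r(fb S)` to a motion of `r(S)`. -/
def liftMotion (m : (reach S.fb v0).Motion) : (reach S v0).Motion :=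
  ⟨m.val.val, reaches_fb_base S m.property.1, reaches_fb_base S m.property.2⟩

variable (f : Simulation S T v0 w0)

def imMotion (m : (reach S.fb v0).Motion) : (reach T w0).Motion :=
  f.comp.onMotion (liftMotion S v0 m)

lemma imMotion_cond (m : (reach S.fb v0).Motion) :
    (T.labL (imMotion S T v0 w0 f m).val).2 = (T.labR (imMotion S T v0 w0 f m).val).1 := by
  have h1 : T.labL (imMotion S T v0 w0 f m).val = S.labL m.val.val :=
    f.comp.labL_eq (liftMotion S v0 m)
  have h2 : T.labR (imMotion S T v0 w0 f m).val = S.labR m.val.val :=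
    f.comp.labR_eq (liftMotion S v0 m)
  rw [h1, h2]
  exact m.val.property

lemma imMotion_src_reach (m : (reach S.fb v0).Motion) :
    Reaches T.fb w0 (T.src (imMotion S T v0 w0 f m).val) := by
  have h : T.src (imMotion S T v0 w0 f m).val
      = (f.comp.onState ⟨S.src m.val.val, reaches_fb_base S m.property.1⟩).val :=
    congrArg Subtype.val (f.comp.src_eq (liftMotion S v0 m))
  rw [h]
  exact reach_image S T v0 w0 f _ m.property.1 _

lemma imMotion_tgt_reach (m : (reach S.fb v0).Motion) :
    Reaches T.fb w0 (T.tgt (imMotion S T v0 w0 f m).val) := by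
  have h : T.tgt (imMotion S T v0 w0 f m).val
      = (f.comp.onState ⟨S.tgt m.val.val, reaches_fb_base S m.property.2⟩).val :=
    congrArg Subtype.val (f.comp.tgt_eq (liftMotion S v0 m))
  rw [h]
  exact reach_image S T v0 w0 f _ m.property.2 _

def fbOnState (q : (reach S.fb v0).State) : (reach T.fb w0).State :=
  ⟨(f.comp.onState ⟨q.val, reaches_fb_base S q.property⟩).val,
    reach_image S T v0 w0 f q.val q.property _⟩

def fbOnMotion (m : (reach S.fb v0).Motion) : (reach T.fb w0).Motion :=
  ⟨⟨(imMotion S T v0 w0 f m).val, imMotion_cond S T v0 w0 f m⟩,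
    imMotion_src_reach S T v0 w0 f m, imMotion_tgt_reach S T v0 w0 f m⟩

def fbComp : Comparison (reach S.fb v0) (reach T.fb w0) where
  onState := fbOnState S T v0 w0 f
  onMotion := fbOnMotion S T v0 w0 f
  src_eq m := by
    apply Subtype.ext
    have h := congrArg Subtype.val (f.comp.src_eq (liftMotion S v0 m))
    exact h
  tgt_eq m := by
    apply Subtype.ext
    have h := congrArg Subtype.val (f.comp.tgt_eq (liftMotion S v0 m))
    exact h
  refl_eq q := by
    apply Subtype.ext
    apply Subtype.ext
    have h := congrArg Subtype.val (f.comp.refl_eq ⟨q.val, reaches_fb_base S q.property⟩)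
    exact h
  labL_eq m := congrArg Prod.fst (f.comp.labL_eq (liftMotion S v0 m))
  labR_eq m := congrArg Prod.snd (f.comp.labR_eq (liftMotion S v0 m))

def fbSim : Simulation S.fb T.fb v0 w0 where
  comp := fbComp S T v0 w0 f
  init := f.init
  lift := by
    intro v e hsrc
    have hsrc' : (reach T w0).src
        (⟨e.val.val, reaches_fb_base T e.property.1, reaches_fb_base T e.property.2⟩
          : (reach T w0).Motion)
        = f.comp.onState ⟨v.val, reaches_fb_base S v.property⟩ := by
      apply Subtype.ext
      have h := congrArg Subtype.val hsrc
      exact h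
    obtain ⟨l, e', v', hpath, hrefl, he'⟩ :=
      f.lift ⟨v.val, reaches_fb_base S v.property⟩ _ hsrc'
    have hpS : IsPath S v.val ((l ++ [e']).map Subtype.val) v'.val :=
      isPath_reach_down S v0 (l ++ [e']) _ _ hpath
    have hfb : ∀ m ∈ (l ++ [e']).map Subtype.val, (S.labL m).2 = (S.labR m).1 := by
      intro m hm
      obtain ⟨m', hm', rfl⟩ := List.mem_map.mp hm
      rcases List.mem_append.mp hm' with h | h
      · have h1 : S.labL m'.val = (eX, eY) := by
          have := (f.comp.labL_eq m').symm
          rw [hrefl m' h] at this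
          exact this.trans ((reach T w0).labL_refl _)
        have h2 : S.labR m'.val = (eY, eZ) := by
          have := (f.comp.labR_eq m').symm
          rw [hrefl m' h] at this
          exact this.trans ((reach T w0).labR_refl _)
        rw [h1, h2]
      · have hm'e : m' = e' := List.mem_singleton.mp h
        subst hm'e
        have h1 : S.labL m'.val = T.labL e.val.val := by
          have := (f.comp.labL_eq m').symm
          rw [he'] at this
          exact this
        have h2 : S.labR m'.val = T.labR e.val.val := by
          have := (f.comp.labR_eq m').symm
          rw [he'] at this
          exact this
        rw [h1, h2]
        exact e.val.property
    obtain ⟨hw, L', hpathfb, hmap⟩ :=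
      lift_path_fb S v0 ((l ++ [e']).map Subtype.val) v.val v'.val hpS hfb v.property
    rcases List.eq_nil_or_concat L' with hnil | ⟨l'', e'', rfl⟩
    · subst hnil; exact absurd ((congrArg List.length hmap).trans (List.length_map _)) (by
      intro h
      have h2 : (l ++ [e']).length = l.length + [e'].length := List.length_append
      have h3 : [e'].length = 1 := rfl
      exact absurd (h2.symm.trans h.symm) (by rw [h3]; exact Nat.succ_ne_zero _))
    · simp only [List.concat_eq_append] at hpathfb hmap
      have hmap := (List.map_append.symm.trans hmap).trans List.map_append
      obtain ⟨hmap1, hmap2⟩ := List.append_inj' hmap (by exact rfl)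
      have hmap2' : e''.val.val = e'.val := (List.cons.inj hmap2).1
      refine ⟨l'', e'', ⟨v'.val, hw⟩, hpathfb, ?_, ?_⟩
      · intro m hm
        have : m.val.val ∈ l.map Subtype.val := by
          rw [← hmap1]
          exact List.mem_map_of_mem hm
        obtain ⟨m₀, hm₀, hval⟩ := List.mem_map.mp this
        apply Subtype.ext
        apply Subtype.ext
        show (f.comp.onMotion (liftMotion S v0 m)).val = _
        rw [show liftMotion S v0 m = m₀ from Subtype.ext hval.symm, hrefl m₀ hm₀]
        rfl
      · apply Subtype.ext
        apply Subtype.ext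
        show (f.comp.onMotion (liftMotion S v0 e'')).val = e.val.val
        rw [show liftMotion S v0 e'' = e' from Subtype.ext hmap2', he']

end FbSimAux

/-- A simulation `f : S ⇒ T` between automata `S, T : X×Y → Y×Z` restricts
to a simulation `fb_Y f : fb_Y S ⇒ fb_Y T` between the feedbacks (with the same initial
states). -/
theorem simulation_fb {X Y Z : Type} {eX : X} {eY : Y} {eZ : Z}
    (S T : Aut (X × Y) (Y × Z) (eX, eY) (eY, eZ))
    (v0 : S.State) (w0 : T.State)
    (f : Simulation S T v0 w0) :
    ∃ h : Simulation S.fb T.fb v0 w0,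
      (∀ (q : (reach S.fb v0).State) (h1 : Reaches S v0 q.val),
        (h.comp.onState q).val = (f.comp.onState ⟨q.val, h1⟩).val) ∧
      (∀ (m : (reach S.fb v0).Motion)
        (h1 : Reaches S v0 (S.src m.val.val) ∧ Reaches S v0 (S.tgt m.val.val)),
        ((h.comp.onMotion m).val).val = (f.comp.onMotion ⟨m.val.val, h1⟩).val) := by
  exact ⟨FbSimAux.fbSim S T v0 w0 f, fun q h1 => rfl, fun m h1 => rfl⟩
end
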